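/- arXiv:1204.1531 — 2 statements merged into one kernel-verified Lean document; each statement's English description precedes it below -/
import Mathlib

section
/- On the elliptic curve y² + txy + (t²(t−1)/16)y = x³ + (t(t−1)/16)x² over ℚ(t), the point P = (0, 0) is a torsion point of exact order 4. -/
open WeierstrassCurve
open Classical

/-- On the elliptic curve `y² + txy + (t²(t−1)/16)y = x³ + (t(t−1)/16)x²` over `ℚ(t)`,
the point `(0, 0)` is a torsion point of exact order `4`. -/
theorem stmt11 :
    ∀ W : Affine (RatFunc ℚ),
      W = { a₁ := RatFunc.X, a₂ := RatFunc.X * (RatFunc.X - 1) / 16,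
            a₃ := RatFunc.X ^ 2 * (RatFunc.X - 1) / 16, a₄ := 0, a₆ := 0 } →
      ∃ h : W.Nonsingular 0 0, addOrderOf (Affine.Point.some _ _ h) = 4 := by
  intro W hW
  subst hW
  set W : Affine (RatFunc ℚ) :=
    { a₁ := RatFunc.X, a₂ := RatFunc.X * (RatFunc.X - 1) / 16,
      a₃ := RatFunc.X ^ 2 * (RatFunc.X - 1) / 16, a₄ := 0, a₆ := 0 } with hWdef
  haveI : CharZero (RatFunc ℚ) :=
    charZero_of_injective_algebraMap (RatFunc.algebraMap_injective ℚ)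
  have h16 : (16 : RatFunc ℚ) ≠ 0 := by norm_num
  have ht : (RatFunc.X : RatFunc ℚ) ≠ 0 := RatFunc.X_ne_zero
  have ht1 : (RatFunc.X : RatFunc ℚ) - 1 ≠ 0 := by
    rw [sub_ne_zero]
    intro h
    simpa using congrArg (RatFunc.eval (RingHom.id ℚ) 0) h
  have ha₃ : W.a₃ ≠ 0 := by
    show RatFunc.X ^ 2 * (RatFunc.X - 1) / 16 ≠ 0
    exact div_ne_zero (mul_ne_zero (pow_ne_zero _ ht) ht1) h16
  have hns : W.Nonsingular 0 0 := by
    rw [Affine.nonsingular_iff, Affine.equation_iff]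
    refine ⟨by ring, Or.inr ?_⟩
    intro h
    apply ha₃
    linear_combination h
  have hyne : (0 : RatFunc ℚ) ≠ W.negY 0 0 := by
    simp only [Affine.negY]
    intro h
    apply ha₃
    linear_combination h
  have hL : W.slope 0 0 0 0 = 0 := by
    rw [Affine.slope_of_Y_ne rfl hyne]
    show ((3 : RatFunc ℚ) * 0 ^ 2 + 2 * W.a₂ * 0 + 0 - W.a₁ * 0) / _ = 0
    rw [show (3 : RatFunc ℚ) * 0 ^ 2 + 2 * W.a₂ * 0 + 0 - W.a₁ * 0 = 0 by ring, zero_div]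
  have hkey : W.addY 0 0 0 (W.slope 0 0 0 0) =
      W.negY (W.addX 0 0 (W.slope 0 0 0 0)) (W.addY 0 0 0 (W.slope 0 0 0 0)) := by
    rw [hL]
    show W.negY _ _ = _
    simp only [Affine.negY, Affine.addX, Affine.negAddY, Affine.addY]
    show _ = -(-(0 * _ + 0) - W.a₁ * _ - W.a₃) - W.a₁ * _ - W.a₃
    field_simp
    ring
  refine ⟨hns, ?_⟩
  set P : W.Point := Affine.Point.some _ _ hns with hPdef
  have h2 : (2 : ℕ) • P = Affine.Point.some
      _ _ (Affine.nonsingular_add hns hns fun hxy => hyne hxy.right) := by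
    rw [two_nsmul]
    exact Affine.Point.add_self_of_Y_ne hyne
  have h4 : (4 : ℕ) • P = 0 := by
    rw [show (4 : ℕ) = 2 * 2 from rfl, mul_nsmul, h2, two_nsmul]
    exact Affine.Point.add_self_of_Y_eq hkey
  have h2ne : ¬ (2 : ℕ) • P = 0 := by
    rw [h2]
    exact Affine.Point.some_ne_zero _
  have h := addOrderOf_eq_prime_pow (p := 2) (n := 1)
    (by rwa [pow_one] : ¬ 2 ^ 1 • P = 0)
    (by rwa [show (2 : ℕ) ^ (1 + 1) = 4 from rfl] : 2 ^ (1 + 1) • P = 0)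
  exact h.trans (by norm_num)
end

section
/- Define χ₁, …, χ₇ ∈ ℚ[p₀, p₁, p₂, q₀, q₁, q₂, q₃] by: χ₁ = 6p₂ + 25; χ₂ = 6q₃ − 2p₁; χ₃ = −q₂ + 13p₂² + 108p₂ + p₀ + 221; χ₄ = 9q₃² − 6p₁q₃ − q₂ − q₀ + 8p₂³ + 85p₂² + (2p₀ + 300)p₂ + p₁² + 10p₀ + 350; χ₅ = (6p₂ + 26)q₃ + q₁ − 2p₁p₂ − 10p₁; χ₆ = −q₂ + p₂² + 12p₂ + 27; χ₇ = q₃. Then the following identities hold in ℚ[p₀,…,q₃]: p₂ = (χ₁ − 25)/6; p₁ = (6χ₇ − χ₂)/2; p₀ = −(3χ₆ − 3χ₃ + χ₁² − 2χ₁ + 7)/3; q₃ = χ₇; q₂ = −(36χ₆ − χ₁² − 22χ₁ + 203)/36; q₁ = (24χ₇ + 6χ₅ + (−χ₁ − 5)χ₂)/6; and q₀ = (27χ₂² − 8χ₁³ − 84χ₁² + 120χ₁ − 136)/108 − (χ₁ + 2)χ₆/3 − χ₄ + (χ₁ + 5)χ₃/3. In particular ℚ[χ₁, …, χ₇] = ℚ[p₀,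 p₁, p₂, q₀, q₁, q₂, q₃]. -/
open MvPolynomial

private lemma Cinv_mul (n : ℚ) (hn : n ≠ 0) :
    (C (1/n : ℚ) : MvPolynomial (Fin 7) ℚ) * C n = 1 := by
  rw [← C_mul]; field_simp; exact C_1

set_option maxHeartbeats 2000000 in
/-- In the polynomial ring `ℚ[p₀, p₁, p₂, q₀, q₁, q₂, q₃]`, define `χ₁, …, χ₇` by the
stated formulas (the fundamental characters of `E₇` in terms of the Weierstrass
coefficients of the `E₇` multiplicative excellent family).  Then the Weierstrass
coefficients are recovered from `χ₁, …, χ₇` by the stated inverse formulas; in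
particular `ℚ[χ₁, …, χ₇] = ℚ[p₀, p₁, p₂, q₀, q₁, q₂, q₃]`. -/
theorem stmt16 :
    ∀ p₀ p₁ p₂ q₀ q₁ q₂ q₃ χ₁ χ₂ χ₃ χ₄ χ₅ χ₆ χ₇ : MvPolynomial (Fin 7) ℚ,
    p₀ = X 0 → p₁ = X 1 → p₂ = X 2 → q₀ = X 3 → q₁ = X 4 → q₂ = X 5 → q₃ = X 6 →
    χ₁ = 6 * p₂ + 25 →
    χ₂ = 6 * q₃ - 2 * p₁ →
    χ₃ = -q₂ + 13 * p₂ ^ 2 + 108 * p₂ + p₀ + 221 →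
    χ₄ = 9 * q₃ ^ 2 - 6 * p₁ * q₃ - q₂ - q₀ + 8 * p₂ ^ 3 + 85 * p₂ ^ 2
        + (2 * p₀ + 300) * p₂ + p₁ ^ 2 + 10 * p₀ + 350 →
    χ₅ = (6 * p₂ + 26) * q₃ + q₁ - 2 * p₁ * p₂ - 10 * p₁ →
    χ₆ = -q₂ + p₂ ^ 2 + 12 * p₂ + 27 →
    χ₇ = q₃ →
    (p₂ = C (1 / 6 : ℚ) * (χ₁ - 25) ∧
     p₁ = C (1 / 2 : ℚ) * (6 * χ₇ - χ₂) ∧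
     p₀ = -(C (1 / 3 : ℚ) * (3 * χ₆ - 3 * χ₃ + χ₁ ^ 2 - 2 * χ₁ + 7)) ∧
     q₃ = χ₇ ∧
     q₂ = -(C (1 / 36 : ℚ) * (36 * χ₆ - χ₁ ^ 2 - 22 * χ₁ + 203)) ∧
     q₁ = C (1 / 6 : ℚ) * (24 * χ₇ + 6 * χ₅ + (-χ₁ - 5) * χ₂) ∧
     q₀ = C (1 / 108 : ℚ) * (27 * χ₂ ^ 2 - 8 * χ₁ ^ 3 - 84 * χ₁ ^ 2 + 120 * χ₁ - 136)
        - C (1 / 3 : ℚ) * ((χ₁ + 2) * χ₆) - χ₄ + C (1 / 3 : ℚ) * ((χ₁ + 5) * χ₃)) ∧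
    Algebra.adjoin ℚ {χ₁, χ₂, χ₃, χ₄, χ₅, χ₆, χ₇} = ⊤ := by
  intro p₀ p₁ p₂ q₀ q₁ q₂ q₃ χ₁ χ₂ χ₃ χ₄ χ₅ χ₆ χ₇
  intro hp₀ hp₁ hp₂ hq₀ hq₁ hq₂ hq₃ h1 h2 h3 h4 h5 h6 h7
  have c2 : (C (1/2 : ℚ) : MvPolynomial (Fin 7) ℚ) * 2 = 1 := by
    rw [show ((2:MvPolynomial (Fin 7) ℚ)) = C (2:ℚ) from (map_ofNat C 2).symm]
    exact Cinv_mul 2 (by norm_num)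
  have c3 : (C (1/3 : ℚ) : MvPolynomial (Fin 7) ℚ) * 3 = 1 := by
    rw [show ((3:MvPolynomial (Fin 7) ℚ)) = C (3:ℚ) from (map_ofNat C 3).symm]
    exact Cinv_mul 3 (by norm_num)
  have c6 : (C (1/6 : ℚ) : MvPolynomial (Fin 7) ℚ) * 6 = 1 := by
    rw [show ((6:MvPolynomial (Fin 7) ℚ)) = C (6:ℚ) from (map_ofNat C 6).symm]
    exact Cinv_mul 6 (by norm_num)
  have c36 : (C (1/36 : ℚ) : MvPolynomial (Fin 7) ℚ) * 36 = 1 := by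
    rw [show ((36:MvPolynomial (Fin 7) ℚ)) = C (36:ℚ) from (map_ofNat C 36).symm]
    exact Cinv_mul 36 (by norm_num)
  have c108 : (C (1/108 : ℚ) : MvPolynomial (Fin 7) ℚ) * 108 = 1 := by
    rw [show ((108:MvPolynomial (Fin 7) ℚ)) = C (108:ℚ) from (map_ofNat C 108).symm]
    exact Cinv_mul 108 (by norm_num)
  have e2 : p₂ = C (1 / 6 : ℚ) * (χ₁ - 25) := by
    rw [h1]; linear_combination (-p₂) * c6
  have e1 : p₁ = C (1 / 2 : ℚ) * (6 * χ₇ - χ₂) := by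
    rw [h2, h7]; linear_combination (-p₁) * c2
  have e0 : p₀ = -(C (1 / 3 : ℚ) * (3 * χ₆ - 3 * χ₃ + χ₁ ^ 2 - 2 * χ₁ + 7)) := by
    rw [h6, h3, h1]; linear_combination (-p₀) * c3
  have f3 : q₃ = χ₇ := h7.symm
  have f2 : q₂ = -(C (1 / 36 : ℚ) * (36 * χ₆ - χ₁ ^ 2 - 22 * χ₁ + 203)) := by
    rw [h6, h1]; linear_combination (-q₂) * c36
  have f1 : q₁ = C (1 / 6 : ℚ) * (24 * χ₇ + 6 * χ₅ + (-χ₁ - 5) * χ₂) := by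
    rw [h7, h5, h1, h2]; linear_combination (-q₁) * c6
  have f0 : q₀ = C (1 / 108 : ℚ) * (27 * χ₂ ^ 2 - 8 * χ₁ ^ 3 - 84 * χ₁ ^ 2 + 120 * χ₁ - 136)
      - C (1 / 3 : ℚ) * ((χ₁ + 2) * χ₆) - χ₄ + C (1 / 3 : ℚ) * ((χ₁ + 5) * χ₃) := by
    rw [h1, h2, h3, h4, h6]
    linear_combination
      (-(9 * q₃ ^ 2 - 6 * p₁ * q₃ + p₁ ^ 2 - 16 * p₂ ^ 3 - 228 * p₂ ^ 2 - 1060 * p₂ - 1617))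
        * c108
      + (-(-q₂ + 24 * p₂ ^ 3 + 313 * p₂ ^ 2 + 2 * p₀ * p₂ + 1360 * p₂ + 10 * p₀ + 1967)) * c3
  refine ⟨⟨e2, e1, e0, f3, f2, f1, f0⟩, ?_⟩
  set A := Algebra.adjoin ℚ {χ₁, χ₂, χ₃, χ₄, χ₅, χ₆, χ₇} with hA
  have m1 : χ₁ ∈ A := Algebra.subset_adjoin (by simp)
  have m2 : χ₂ ∈ A := Algebra.subset_adjoin (by simp)
  have m3 : χ₃ ∈ A := Algebra.subset_adjoin (by simp)
  have m4 : χ₄ ∈ A := Algebra.subset_adjoin (by simp)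
  have m5 : χ₅ ∈ A := Algebra.subset_adjoin (by simp)
  have m6 : χ₆ ∈ A := Algebra.subset_adjoin (by simp)
  have m7 : χ₇ ∈ A := Algebra.subset_adjoin (by simp)
  have mC : ∀ a : ℚ, (C a : MvPolynomial (Fin 7) ℚ) ∈ A := fun a => by
    simpa [MvPolynomial.algebraMap_eq] using A.algebraMap_mem a
  rw [eq_top_iff, ← MvPolynomial.adjoin_range_X]
  apply Algebra.adjoin_le
  rintro _ ⟨i, rfl⟩
  fin_cases i
  · show X 0 ∈ A
    rw [← hp₀, e0]
    repeat first
      | exact m1 | exact m2 | exact m3 | exact m4 | exact m5 | exact m6 | exact m7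
      | exact mC _ | exact ofNat_mem A _
      | apply A.neg_mem | apply A.add_mem | apply A.sub_mem | apply A.mul_mem
      | apply A.pow_mem
  · show X 1 ∈ A
    rw [← hp₁, e1]
    repeat first
      | exact m1 | exact m2 | exact m3 | exact m4 | exact m5 | exact m6 | exact m7
      | exact mC _ | exact ofNat_mem A _
      | apply A.neg_mem | apply A.add_mem | apply A.sub_mem | apply A.mul_mem
      | apply A.pow_mem
  · show X 2 ∈ A
    rw [← hp₂, e2]
    repeat first
      | exact m1 | exact m2 | exact m3 | exact m4 | exact m5 | exact m6 | exact m7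
      | exact mC _ | exact ofNat_mem A _
      | apply A.neg_mem | apply A.add_mem | apply A.sub_mem | apply A.mul_mem
      | apply A.pow_mem
  · show X 3 ∈ A
    rw [← hq₀, f0]
    repeat first
      | exact m1 | exact m2 | exact m3 | exact m4 | exact m5 | exact m6 | exact m7
      | exact mC _ | exact ofNat_mem A _
      | apply A.neg_mem | apply A.add_mem | apply A.sub_mem | apply A.mul_mem
      | apply A.pow_mem
  · show X 4 ∈ A
    rw [← hq₁, f1]
    repeat first
      | exact m1 | exact m2 | exact m3 | exact m4 | exact m5 | exact m6 | exact m7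
      | exact mC _ | exact ofNat_mem A _
      | apply A.neg_mem | apply A.add_mem | apply A.sub_mem | apply A.mul_mem
      | apply A.pow_mem
  · show X 5 ∈ A
    rw [← hq₂, f2]
    repeat first
      | exact m1 | exact m2 | exact m3 | exact m4 | exact m5 | exact m6 | exact m7
      | exact mC _ | exact ofNat_mem A _
      | apply A.neg_mem | apply A.add_mem | apply A.sub_mem | apply A.mul_mem
      | apply A.pow_mem
  · show X 6 ∈ A
    rw [← hq₃, f3]
    exact m7
end
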